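/- (Proposition: case of bounded scalar field.) Assume 0 < γ ≤ 2. Let (φ, y, ρ, H) be a solution of the flat FLRW system on I = [t₀, T) satisfying the Friedmann constraint at every t ∈ I, with ρ(t₀) ≥ 0. Suppose the scalar field φ is bounded on I and the Hubble function H is not bounded below on I. Then T < ∞ and H(t) → −∞ as t → T⁻. -/

import Mathlib

open Real Set Filter

/-- A solution of the flat FLRW system on the set `I`:
`φ' = y`, `y' = -3Hy - V'(φ) + α(φ)ρ`, `ρ' = -ρ(3γH + α(φ)y)`, `H' = -(1/2)(y² + γρ)`. -/
def IsFLRWSolution (γ : ℝ) (α V : ℝ → ℝ) (I : Set ℝ) (φ y ρ H : ℝ → ℝ) : Prop :=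
  ∀ t ∈ I,
    HasDerivWithinAt φ (y t) I t ∧
    HasDerivWithinAt y (-3 * H t * y t - deriv V (φ t) + α (φ t) * ρ t) I t ∧
    HasDerivWithinAt ρ (-(ρ t) * (3 * γ * H t + α (φ t) * y t)) I t ∧
    HasDerivWithinAt H (-(1/2) * (y t ^ 2 + γ * ρ t)) I t

/-- The Friedmann constraint `3H² = (1/2)y² + V(φ) + ρ` at time `t`. -/
def FriedmannConstraint (V : ℝ → ℝ) (φ y ρ H : ℝ → ℝ) (t : ℝ) : Prop :=
  3 * H t ^ 2 = (1/2) * y t ^ 2 + V (φ t) + ρ t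

/-- The interval `[t₀, T)` with possibly infinite right endpoint `T : EReal`. -/
def IcoE (t₀ : ℝ) (T : EReal) : Set ℝ := {t : ℝ | t₀ ≤ t ∧ (t : EReal) < T}

/-- The filter of real times `t → T⁻` (this is `𝓝[<] T` for finite `T`, and `atTop`
for `T = ⊤`). -/
noncomputable def leftLimFilter (T : EReal) : Filter ℝ :=
  Filter.comap (fun t : ℝ => (t : EReal)) (nhdsWithin T (Set.Iio T))

/-- The solution `(φ, y, ρ, H)` on `[t₀, T)` extends to a solution of the same system
on the set `J`. -/
def ExtendsSol (γ : ℝ) (α V : ℝ → ℝ) (t₀ : ℝ) (T : EReal)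
    (φ y ρ H : ℝ → ℝ) (J : Set ℝ) : Prop :=
  ∃ φ' y' ρ' H' : ℝ → ℝ,
    IsFLRWSolution γ α V J φ' y' ρ' H' ∧
    Set.EqOn φ φ' (IcoE t₀ T) ∧ Set.EqOn y y' (IcoE t₀ T) ∧
    Set.EqOn ρ ρ' (IcoE t₀ T) ∧ Set.EqOn H H' (IcoE t₀ T)

/-- A solution on `[t₀, T)` is right-maximal if it can be extended neither to a solution
on `[t₀, T]` (when `T` is finite) nor to a solution on `[t₀, T')` for some `T' > T`. -/
def RightMaximal (γ : ℝ) (α V : ℝ → ℝ) (t₀ : ℝ) (T : EReal)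
    (φ y ρ H : ℝ → ℝ) : Prop :=
  ¬ ((T ≠ ⊤ ∧ ExtendsSol γ α V t₀ T φ y ρ H (Set.Icc t₀ T.toReal)) ∨
     (∃ T' : EReal, T < T' ∧ ExtendsSol γ α V t₀ T φ y ρ H (IcoE t₀ T')))

/-- if the scalar field is bounded and the Hubble function is not bounded
below along a solution, then `T < ∞` and `H(t) → -∞` as `t → T⁻`. -/
theorem flrw_recollapse_of_bounded_scalar_field
    (γ : ℝ) (hγ : 0 < γ) (hγ2 : γ ≤ 2)
    (α V : ℝ → ℝ) (hα : Continuous α) (hV : ContDiff ℝ 2 V)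
    (t₀ : ℝ) (T : EReal) (hT : (t₀ : EReal) < T)
    (φ y ρ H : ℝ → ℝ)
    (hsol : IsFLRWSolution γ α V (IcoE t₀ T) φ y ρ H)
    (hcon : ∀ t ∈ IcoE t₀ T, FriedmannConstraint V φ y ρ H t)
    (hρ₀ : 0 ≤ ρ t₀)
    (hφbdd : ∃ M : ℝ, ∀ t ∈ IcoE t₀ T, |φ t| ≤ M)
    (hHunbdd : ¬ ∃ m : ℝ, ∀ t ∈ IcoE t₀ T, m ≤ H t) :
    T < ⊤ ∧ Tendsto H (leftLimFilter T) atBot := by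
  classical
  set I := IcoE t₀ T with hIdef
  have hsubI : ∀ {a b : ℝ}, a ∈ I → b ∈ I → Icc a b ⊆ I := by
    intro a b ha hb x hx
    exact ⟨ha.1.trans hx.1, lt_of_le_of_lt (EReal.coe_le_coe_iff.2 hx.2) hb.2⟩
  have ht₀I : t₀ ∈ I := ⟨le_refl _, hT⟩
  obtain ⟨M, hM⟩ := hφbdd
  have hM0 : 0 ≤ M := le_trans (abs_nonneg _) (hM t₀ ht₀I)
  obtain ⟨x₀, -, hx₀⟩ := (isCompact_Icc (a := -M) (b := M)).exists_isMaxOn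
    (nonempty_Icc.2 (by linarith)) hV.continuous.continuousOn
  set C := V x₀ with hCdef
  have hVC : ∀ t ∈ I, V (φ t) ≤ C := by
    intro t ht
    have h := abs_le.1 (hM t ht)
    exact hx₀ (mem_Icc.2 ⟨h.1, h.2⟩)
  set K := Real.sqrt (max C 0) + 1 with hKdef
  have hK1 : 1 ≤ K := le_add_of_nonneg_left (Real.sqrt_nonneg _)
  have hKsq : max C 0 + 1 ≤ K ^ 2 := by
    have h := Real.sq_sqrt (le_max_right C 0)
    nlinarith [Real.sqrt_nonneg (max C 0)]
  have hCK : C + 1 ≤ K ^ 2 := le_trans (add_le_add_left (le_max_left C 0) 1) hKsq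
  have hHsq : ∀ h : ℝ, h ≤ -K → K ^ 2 ≤ h ^ 2 := by
    intro h hh
    nlinarith [mul_nonneg (by linarith : (0:ℝ) ≤ -h - K) (by linarith : (0:ℝ) ≤ K - h)]
  have hHc : ContinuousOn H I := fun t ht => ((hsol t ht).2.2.2).continuousWithinAt
  have hderiv : ∀ t ∈ I, -(1/2) * (y t ^ 2 + γ * ρ t) ≤ -(γ/2) * (3 * H t ^ 2 - C) := by
    intro t ht
    have h1 : 3 * H t ^ 2 = (1/2) * y t ^ 2 + V (φ t) + ρ t := hcon t ht
    have h2 := hVC t ht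
    nlinarith [sq_nonneg (y t), mul_nonneg (sub_nonneg.2 hγ2) (sq_nonneg (y t)),
      mul_nonneg hγ.le (sub_nonneg.2 h2)]
  have hDright : ∀ {b : ℝ}, b ∈ I → ∀ x ∈ I, x < b →
      HasDerivWithinAt H (-(1/2) * (y x ^ 2 + γ * ρ x)) (Ici x) x := by
    intro b hb x hx hxb
    exact ((hsol x hx).2.2.2.mono (hsubI hx hb)).mono_of_mem_nhdsWithin
      (Icc_mem_nhdsGE_of_mem ⟨le_refl x, hxb⟩)
  -- Barrier: once `H` drops below `-K`, it never comes back up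
  have barrier : ∀ s ∈ I, H s ≤ -K → ∀ b ∈ I, s ≤ b → H b ≤ H s := by
    intro s hs hHs b hb hsb
    have key : ∀ ⦃x⦄, x ∈ Icc s b → H x ≤ H s := by
      refine image_le_of_deriv_right_lt_deriv_boundary'
        (f' := fun t => -(1/2) * (y t ^ 2 + γ * ρ t)) (B := fun _ => H s) (B' := fun _ => 0)
        (hHc.mono (hsubI hs hb))
        (fun x hx => hDright hb x (hsubI hs hb ⟨hx.1, hx.2.le⟩) hx.2)
        (le_refl (H s)) continuousOn_const
        (fun x _ => hasDerivWithinAt_const x _ (H s)) ?_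
      intro x hx hEq
      have h1 := hderiv x (hsubI hs hb ⟨hx.1, hx.2.le⟩)
      have h2 : K ^ 2 ≤ H x ^ 2 := hHsq _ (hEq ▸ hHs)
      have h3 : 0 < 3 * H x ^ 2 - C := by nlinarith
      nlinarith [mul_pos hγ h3]
    exact key ⟨hsb, le_refl b⟩
  push_neg at hHunbdd
  obtain ⟨t₁, ht₁I, hHt₁⟩ := hHunbdd (-K)
  have hc : (0:ℝ) < 3 * γ / 4 := by positivity
  -- Riccati comparison: after `t₁` the solution exists for at most `K⁻¹ / (3γ/4)` more time
  have ric : ∀ b ∈ I, t₁ ≤ b → b < t₁ + K⁻¹ / (3 * γ / 4) := by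
    intro b hb ht₁b
    have hmem : Icc t₁ b ⊆ I := hsubI ht₁I hb
    have hHle : ∀ x ∈ Icc t₁ b, H x ≤ H t₁ := fun x hx =>
      barrier t₁ ht₁I hHt₁.le x (hmem hx) hx.1
    have hHneg : ∀ x ∈ Icc t₁ b, H x < 0 := fun x hx =>
      lt_of_le_of_lt (hHle x hx) (lt_of_lt_of_le hHt₁ (by linarith))
    have key : ∀ ⦃x⦄, x ∈ Icc t₁ b →
        -(H x)⁻¹ ≤ -(H t₁)⁻¹ + 3 * γ / 4 * (t₁ - x) := by
      refine image_le_of_deriv_right_le_deriv_boundary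
        (f := fun t => -(H t)⁻¹)
        (f' := fun x => -(1/2) * (y x ^ 2 + γ * ρ x) / H x ^ 2)
        (B := fun x => -(H t₁)⁻¹ + 3 * γ / 4 * (t₁ - x)) (B' := fun _ => -(3 * γ / 4))
        (((hHc.mono hmem).inv₀ (fun x hx => (hHneg x hx).ne)).neg)
        ?_ (by simp) ?_ ?_ ?_
      · intro x hx
        have hxI := hmem ⟨hx.1, hx.2.le⟩
        have h0 : H x ≠ 0 := (hHneg x ⟨hx.1, hx.2.le⟩).ne
        have h := ((hDright hb x hxI hx.2).inv h0).neg
        exact h.congr_deriv (by ring)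
      · exact (continuousOn_const.add (continuousOn_const.mul
          (continuousOn_const.sub continuousOn_id))).mono (subset_refl _)
      · intro x _
        have h := (((hasDerivWithinAt_id x (Ici x)).const_sub t₁).const_mul
          (3 * γ / 4)).const_add (-(H t₁)⁻¹)
        simpa using h
      · intro x hx
        have hxI := hmem ⟨hx.1, hx.2.le⟩
        have h1 := hderiv x hxI
        have h2 : K ^ 2 ≤ H x ^ 2 := hHsq _ ((hHle x ⟨hx.1, hx.2.le⟩).trans hHt₁.le)
        have hp : (0:ℝ) < H x ^ 2 := lt_of_lt_of_le (by nlinarith) h2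
        rw [div_le_iff₀ hp]
        have h3 : C ≤ H x ^ 2 := by nlinarith
        nlinarith [mul_nonneg hγ.le (sub_nonneg.2 h3), mul_nonneg hγ.le (sq_nonneg (H x))]
    have hfb := key (right_mem_Icc.2 ht₁b)
    have hb0 : H b < 0 := hHneg b (right_mem_Icc.2 ht₁b)
    have h1 : (0:ℝ) < -(H b)⁻¹ := by
      simpa using inv_lt_zero.2 hb0
    have h2 : -(H t₁)⁻¹ ≤ K⁻¹ := by
      rw [show -(H t₁)⁻¹ = (-(H t₁))⁻¹ by rw [inv_neg]]
      exact inv_anti₀ (by linarith) (by linarith)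
    have h4 : b - t₁ < K⁻¹ / (3 * γ / 4) := (lt_div_iff₀ hc).2 (by linarith)
    linarith
  have hTR : T ≤ ((t₁ + K⁻¹ / (3 * γ / 4) : ℝ) : EReal) := by
    by_contra hcon'
    push_neg at hcon'
    have ht₁R : t₁ ≤ t₁ + K⁻¹ / (3 * γ / 4) := le_add_of_nonneg_right (by positivity)
    have hRI : t₁ + K⁻¹ / (3 * γ / 4) ∈ I := ⟨ht₁I.1.trans ht₁R, hcon'⟩
    exact absurd (ric _ hRI ht₁R) (lt_irrefl _)
  refine ⟨lt_of_le_of_lt hTR (EReal.coe_lt_top _), ?_⟩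
  rw [tendsto_atBot]
  intro m
  obtain ⟨s, hsI, hHs⟩ := hHunbdd (min m (-K))
  have hmem : (fun t : ℝ => (t : EReal)) ⁻¹' Ioo (s : EReal) T ∈ leftLimFilter T :=
    preimage_mem_comap (Ioo_mem_nhdsLT_of_mem ⟨hsI.2, le_refl T⟩)
  filter_upwards [hmem] with t ht
  obtain ⟨h1, h2⟩ := ht
  have hst : s ≤ t := (EReal.coe_lt_coe_iff.1 h1).le
  have htI : t ∈ I := ⟨hsI.1.trans hst, h2⟩
  have := barrier s hsI (le_of_lt (lt_of_lt_of_le hHs (min_le_right _ _))) t htI hst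
  have hm := min_le_left m (-K)
  linarith
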